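/- Let N be a semistandard Young tableau of shape ν ⊢ n+1 with nonnegative entries, and suppose the maximal element of the multiset Dsp^c(N) is strictly less than n (in particular this holds if the entry sum of N is less than n). If additionally n > 2·i_max where i_max is that maximal element, then N = ι̂M for a unique partition λ ⊢ n and M ∈ SSYT(λ), where ι̂M is obtained from M by adding a box at the end of the first row, shifting the first row right by one, and placing 0 in the upper-left corner. In particular, if n > 2d then every N ∈ SSYT_d(ν) is of the form ι̂M with Σ(M) = d. -/

import Mathlib

open MvPolynomial

noncomputable section
open scoped Classical

namespace GHS

def entrySumF (μ : YoungDiagram) (f : ℕ → ℕ → ℕ) : ℕ := ∑ c ∈ μ.cells, f c.1 c.2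

def entryFun {μ : YoungDiagram} (M : SemistandardYoungTableau μ) : ℕ → ℕ → ℕ := fun r c => M r c

def entrySum {μ : YoungDiagram} (M : SemistandardYoungTableau μ) : ℕ := entrySumF μ (entryFun M)

def entryMultisetF (μ : YoungDiagram) (f : ℕ → ℕ → ℕ) : Multiset ℕ :=
  μ.cells.val.map fun c => f c.1 c.2

def entryMultiset {μ : YoungDiagram} (M : SemistandardYoungTableau μ) : Multiset ℕ := entryMultisetF μ (entryFun M)

def countLtF (μ : YoungDiagram) (f : ℕ → ℕ → ℕ) (h : ℕ) : ℕ :=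
  (μ.cells.filter fun c => f c.1 c.2 < h).card

def countGe {μ : YoungDiagram} (M : SemistandardYoungTableau μ) (t : ℕ) : ℕ :=
  (μ.cells.filter fun c => t ≤ M c.1 c.2).card

def maxEntryF (μ : YoungDiagram) (f : ℕ → ℕ → ℕ) : ℕ := μ.cells.sup fun c => f c.1 c.2

def DspCF (n : ℕ) (μ : YoungDiagram) (f : ℕ → ℕ → ℕ) : Multiset ℕ :=
  (Finset.Icc 1 (maxEntryF μ f)).val.map fun h => n - countLtF μ f h

def DspC (n : ℕ) {μ : YoungDiagram} (M : SemistandardYoungTableau μ) : Multiset ℕ := DspCF n μ (entryFun M)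

def stdFun (μ : YoungDiagram) (f : ℕ → ℕ → ℕ) : ℕ → ℕ → ℕ := fun r c =>
  if (r, c) ∈ μ then
    (μ.cells.filter fun c' => f c'.1 c'.2 < f r c ∨ (f c'.1 c'.2 = f r c ∧ c'.2 < c)).card + 1
  else 0

def IsStandard (n : ℕ) {μ : YoungDiagram} (S : SemistandardYoungTableau μ) : Prop :=
  entryMultiset S = (Multiset.range n).map (· + 1)

def rowOfF (f : ℕ → ℕ → ℕ) (v : ℕ) : ℕ := sInf {r | ∃ c, f r c = v}

def DsiSet (n : ℕ) {μ : YoungDiagram} (S : SemistandardYoungTableau μ) : Finset ℕ :=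
  (Finset.Ioo 0 n).filter fun i => rowOfF (entryFun S) i < rowOfF (entryFun S) (i + 1)

def jseq (n k : ℕ) (J : Multiset ℕ) (h : ℕ) : ℕ :=
  if h = 0 then 0 else if h = k then n else (J.sort (· ≤ ·)).getD (h - 1) 0

def compFun (n k : ℕ) (J : Multiset ℕ) (h : ℕ) : ℕ := jseq n k J (h + 1) - jseq n k J h

def compMap (n k : ℕ) (J : Multiset ℕ) : Fin k → ℕ := fun h => compFun n k J (h : ℕ)

def contentOfJ (n k : ℕ) (J : Multiset ℕ) : Multiset ℕ :=
  (Multiset.range k).bind fun h => Multiset.replicate (compFun n k J h) h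

def IsTabloid (n : ℕ) (μ : YoungDiagram) (T : Fin n → ℕ × ℕ) : Prop :=
  Function.Injective T ∧ ∀ i, T i ∈ μ

def IsStdFill (n : ℕ) (T : Fin n → ℕ × ℕ) : Prop :=
  ∀ i j : Fin n,
    (((T i).1 = (T j).1 ∧ (T i).2 < (T j).2) ∨ ((T i).2 = (T j).2 ∧ (T i).1 < (T j).1)) → i < j

def rowGroup (n : ℕ) (T : Fin n → ℕ × ℕ) : Finset (Equiv.Perm (Fin n)) :=
  Finset.univ.filter fun τ => ∀ i, (T (τ i)).1 = (T i).1

def colGroup (n : ℕ) (T : Fin n → ℕ × ℕ) : Finset (Equiv.Perm (Fin n)) :=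
  Finset.univ.filter fun σ => ∀ i, (T (σ i)).2 = (T i).2

def pmonF (n : ℕ) (f : ℕ → ℕ → ℕ) (T : Fin n → ℕ × ℕ) : MvPolynomial (Fin n) ℚ :=
  ∏ i, X i ^ f (T i).1 (T i).2

def pexpF (n : ℕ) (f : ℕ → ℕ → ℕ) (T : Fin n → ℕ × ℕ) : Fin n →₀ ℕ :=
  Finsupp.equivFunOnFinite.symm fun i => f (T i).1 (T i).2

def symRT (n : ℕ) (T : Fin n → ℕ × ℕ) (p : MvPolynomial (Fin n) ℚ) : MvPolynomial (Fin n) ℚ :=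
  ∑ τ ∈ rowGroup n T, rename (⇑τ) p

def antisym (n : ℕ) (T : Fin n → ℕ × ℕ) (p : MvPolynomial (Fin n) ℚ) : MvPolynomial (Fin n) ℚ :=
  ∑ σ ∈ colGroup n T, ((Equiv.Perm.sign σ : ℤ) : ℚ) • rename (⇑σ) p

def youngSym (n : ℕ) (T : Fin n → ℕ × ℕ) (p : MvPolynomial (Fin n) ℚ) : MvPolynomial (Fin n) ℚ :=
  antisym n T (symRT n T p)

def stabCardF (n : ℕ) (f : ℕ → ℕ → ℕ) (T : Fin n → ℕ × ℕ) : ℕ :=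
  ((rowGroup n T).filter fun τ : Equiv.Perm (Fin n) => rename (⇑τ) (pmonF n f T) = pmonF n f T).card

def rowPoly (n : ℕ) (f : ℕ → ℕ → ℕ) (T : Fin n → ℕ × ℕ) : MvPolynomial (Fin n) ℚ :=
  (stabCardF n f T : ℚ)⁻¹ • symRT n T (pmonF n f T)

def FMTF (n : ℕ) (f : ℕ → ℕ → ℕ) (T : Fin n → ℕ × ℕ) : MvPolynomial (Fin n) ℚ :=
  (stabCardF n f T : ℚ)⁻¹ • youngSym n T (pmonF n f T)

def FMT (n : ℕ) {μ : YoungDiagram} (M : SemistandardYoungTableau μ) (T : Fin n → ℕ × ℕ) : MvPolynomial (Fin n) ℚ :=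
  FMTF n (entryFun M) T

def degT (n : ℕ) (T : Fin n → ℕ × ℕ) (d : Fin n →₀ ℕ) (j : ℕ) : ℕ :=
  ∑ i ∈ Finset.univ.filter fun i => (T i).2 = j, d i

def gtT (n : ℕ) (T : Fin n → ℕ × ℕ) (d e : Fin n →₀ ℕ) : Prop :=
  ∃ j, degT n T e j < degT n T d j ∧ ∀ j', j < j' → degT n T d j' = degT n T e j'

def VMF (n : ℕ) (μ : YoungDiagram) (f : ℕ → ℕ → ℕ) : Submodule ℚ (MvPolynomial (Fin n) ℚ) :=
  Submodule.span ℚ {p | ∃ T, IsTabloid n μ T ∧ p = FMTF n f T}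

def VM (n : ℕ) {μ : YoungDiagram} (M : SemistandardYoungTableau μ) : Submodule ℚ (MvPolynomial (Fin n) ℚ) :=
  VMF n μ (entryFun M)

def spechtP (n : ℕ) (T : Fin n → ℕ × ℕ) : MvPolynomial (Fin n) ℚ := ∏ i, X i ^ (T i).1

def SpechtSub (n : ℕ) (μ : YoungDiagram) : Submodule ℚ (MvPolynomial (Fin n) ℚ) :=
  Submodule.span ℚ {p | ∃ T, IsTabloid n μ T ∧ p = youngSym n T (spechtP n T)}

def EqHoms (n : ℕ) (W V : Submodule ℚ (MvPolynomial (Fin n) ℚ)) :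
    Submodule ℚ (W →ₗ[ℚ] MvPolynomial (Fin n) ℚ) where
  carrier := {g | (∀ x, g x ∈ V) ∧ ∀ (σ : Equiv.Perm (Fin n)) (x y : W),
      (y : MvPolynomial (Fin n) ℚ) = rename (⇑σ) (x : MvPolynomial (Fin n) ℚ) →
      g y = rename (⇑σ) (g x)}
  add_mem' := by
    rintro a b ⟨ha1, ha2⟩ ⟨hb1, hb2⟩
    refine ⟨fun x => ?_, fun σ x y hxy => ?_⟩
    · simpa using V.add_mem (ha1 x) (hb1 x)
    · simp [LinearMap.add_apply, map_add, ha2 σ x y hxy, hb2 σ x y hxy]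
  zero_mem' := ⟨fun x => by simp, fun σ x y hxy => by simp⟩
  smul_mem' := by
    rintro c a ⟨ha1, ha2⟩
    refine ⟨fun x => ?_, fun σ x y hxy => ?_⟩
    · simpa using V.smul_mem c (ha1 x)
    · simp [LinearMap.smul_apply, map_smul, ha2 σ x y hxy]

def multiplicityIn (n : ℕ) (W V : Submodule ℚ (MvPolynomial (Fin n) ℚ)) : ℕ :=
  Module.finrank ℚ ↑(EqHoms n W V)

def contentSub (n : ℕ) (μc : Multiset ℕ) : Submodule ℚ (MvPolynomial (Fin n) ℚ) :=
  Submodule.span ℚ {p | ∃ d : Fin n → ℕ, Finset.univ.val.map d = μc ∧ p = ∏ i, X i ^ d i}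

def padded (n : ℕ) (μc : Multiset ℕ) : Multiset ℕ :=
  μc + Multiset.replicate (n - Multiset.card μc) 0

def IsCocharge {μ : YoungDiagram} (C : SemistandardYoungTableau μ) : Prop :=
  ∀ h : ℕ, 0 < h → ∀ v ∈ μ.cells, C v.1 v.2 = h →
    (∀ v' ∈ μ.cells, C v'.1 v'.2 = h → v.2 ≤ v'.2) →
    ∃ v'' ∈ μ.cells, C v''.1 v''.2 = h - 1 ∧ v''.1 < v.1

def updF (f : ℕ → ℕ → ℕ) (r c v : ℕ) : ℕ → ℕ → ℕ :=
  fun r' c' => if r' = r ∧ c' = c then v else f r' c'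

def slide : ℕ → (ℕ → ℕ → ℕ) → ℕ × ℕ → (ℕ → ℕ → ℕ) × (ℕ × ℕ)
  | 0, f, p => (f, p)
  | fuel + 1, f, (r, c) =>
    let down := f (r + 1) c
    let right := f r (c + 1)
    if down = 0 ∧ right = 0 then (f, (r, c))
    else if right = 0 ∨ (down ≠ 0 ∧ down < right) then
      slide fuel (updF (updF f r c down) (r + 1) c 0) (r + 1, c)
    else
      slide fuel (updF (updF f r c right) r (c + 1) 0) (r, c + 1)

def evacAux : ℕ → (ℕ → ℕ → ℕ) → ℕ → ℕ → ℕ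
  | 0, _ => fun _ _ => 0
  | m + 1, f =>
    let gp := slide (m + 1) (updF f 0 0 0) (0, 0)
    updF (evacAux m gp.1) gp.2.1 gp.2.2 (m + 1)

def ctJfun (J : Multiset ℕ) (f : ℕ → ℕ → ℕ) : ℕ → ℕ → ℕ :=
  fun r c => J.countP fun j => j < f r c

def JminF (μ : YoungDiagram) (f : ℕ → ℕ → ℕ) : Multiset ℕ :=
  (Finset.Icc 1 (maxEntryF μ f)).val.map fun h => countLtF μ f h

def deltaOne (n : ℕ) (μ : YoungDiagram) (f : ℕ → ℕ → ℕ) (v : ℕ × ℕ) : Prop :=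
  ¬ (rowOfF (evacAux n (stdFun μ f)) n < v.1)

def hatAdd (n : ℕ) (μ : YoungDiagram) (f : ℕ → ℕ → ℕ) (v : ℕ × ℕ) : ℕ → ℕ → ℕ :=
  let Sv := evacAux (n + 1) (updF (evacAux n (stdFun μ f)) v.1 v.2 (n + 1))
  let Jp : Multiset ℕ := (JminF μ f).map (· + 1)
  if deltaOne n μ f v then ctJfun Jp Sv else ctJfun (1 ::ₘ Jp) Sv

def iotaHatFun (f : ℕ → ℕ → ℕ) : ℕ → ℕ → ℕ :=
  fun r c => if r = 0 then (if c = 0 then 0 else f 0 (c - 1)) else f r c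

def iotaT (n : ℕ) (lam : YoungDiagram) (T : Fin n → ℕ × ℕ) : Fin (n + 1) → ℕ × ℕ :=
  fun i => if h : (i : ℕ) < n then T ⟨(i : ℕ), h⟩ else (0, lam.rowLen 0)

def plusOneF (μ : YoungDiagram) (f : ℕ → ℕ → ℕ) : ℕ → ℕ → ℕ :=
  fun r c => if (r, c) ∈ μ then f r c + 1 else 0

def Omega (n : ℕ) (α : ℕ → ℕ) :=
  {w : Fin n → ℕ // ∀ h, (Finset.univ.filter fun i => w i = h).card = α h}

def shiftW (n : ℕ) (α : ℕ → ℕ) (σ : Equiv.Perm (Fin n)) (w : Omega n α) : Omega n α :=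
  ⟨fun i => w.1 (σ.symm i), by
    intro h
    have key : (Finset.univ.filter fun i => w.1 (σ.symm i) = h)
        = (Finset.univ.filter fun i => w.1 i = h).image σ := by
      ext i
      simp only [Finset.mem_filter, Finset.mem_univ, true_and, Finset.mem_image]
      constructor
      · intro hi
        exact ⟨σ.symm i, hi, Equiv.apply_symm_apply σ i⟩
      · rintro ⟨j, hj, rfl⟩
        simpa using hj
    rw [key, Finset.card_image_of_injective _ σ.injective]
    exact w.2 h⟩

def permOmega (n : ℕ) (α : ℕ → ℕ) (σ : Equiv.Perm (Fin n)) : Omega n α ≃ Omega n α where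
  toFun := shiftW n α σ
  invFun := shiftW n α σ⁻¹
  left_inv w := by
    apply Subtype.ext
    funext i
    simp [shiftW, Equiv.Perm.inv_def]
  right_inv w := by
    apply Subtype.ext
    funext i
    simp [shiftW, Equiv.Perm.inv_def]

def ExtPart (n d : ℕ) : Submodule ℚ (MvPolynomial (Fin (n + 1)) ℚ) :=
  ⨆ (lam : YoungDiagram) (_ : lam.card = n) (M : SemistandardYoungTableau lam) (_ : entrySum M = d)
    (v : ℕ × ℕ) (_ : v ∉ lam.cells) (ν : YoungDiagram) (_ : ν.cells = insert v lam.cells)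
    (_ : deltaOne n lam (entryFun M) v),
    VMF (n + 1) ν (hatAdd n lam (entryFun M) v)

def LEPart (n d : ℕ) : Submodule ℚ (MvPolynomial (Fin (n + 1)) ℚ) :=
  ⨆ (lam : YoungDiagram) (_ : lam.card = n) (M : SemistandardYoungTableau lam) (_ : entrySum M + n = d)
    (v : ℕ × ℕ) (_ : v ∉ lam.cells) (ν : YoungDiagram) (_ : ν.cells = insert v lam.cells)
    (_ : ¬ deltaOne n lam (entryFun M) v),
    VMF (n + 1) ν (hatAdd n lam (entryFun M) v)

def EPart (n d : ℕ) : Submodule ℚ (MvPolynomial (Fin (n + 1)) ℚ) :=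
  ⨆ (e : ℕ) (_ : e + (n + 1) = d),
    (homogeneousSubmodule (Fin (n + 1)) ℚ e).map
      (LinearMap.mulLeft ℚ (∏ i : Fin (n + 1), (X i : MvPolynomial (Fin (n + 1)) ℚ)))

theorem stmt16 (n : ℕ) (hn : 1 ≤ n) (ν : YoungDiagram) (hcard : ν.card = n + 1)
    (N : SemistandardYoungTableau ν)
    (hmax : ∀ i ∈ DspC (n + 1) N, i < n)
    (hbig : ∀ i ∈ DspC (n + 1) N, 2 * i < n) :
    ∃! f : ℕ → ℕ → ℕ,
      (∃ (lam : YoungDiagram) (M : SemistandardYoungTableau lam), lam.card = n ∧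
        ν.cells = insert (0, lam.rowLen 0) lam.cells ∧ f = entryFun M ∧
        entrySum M = entrySum N) ∧
      ∀ r c, N r c = iotaHatFun f r c := by
  classical
  set g0 : ℕ → ℕ → ℕ := fun r c => if r = 0 then N 0 (c + 1) else N r c with hg0
  set zC : Finset (ℕ × ℕ) := ν.cells.filter (fun c => N c.1 c.2 = 0) with hzC
  set z : ℕ := zC.card with hzdef
  -- all zero cells are in row 0
  have hL1 : ∀ p ∈ zC, p.1 = 0 := by
    rintro ⟨r, c⟩ hp
    simp only [hzC, Finset.mem_filter, YoungDiagram.mem_cells] at hp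
    by_contra hr
    have h2 : N r c = 0 := hp.2
    have h3 : N 0 c < N r c := N.col_strict (Nat.pos_of_ne_zero hr) hp.1
    omega
  have hcard' : ν.cells.card = n + 1 := hcard
  have hzle : z ≤ n + 1 := by
    have h1 : zC.card ≤ ν.cells.card := Finset.card_le_card (Finset.filter_subset _ _)
    omega
  -- a positive entry forces n + 2 < 2 z
  have hbig1 : ∀ r c, (r, c) ∈ ν → 1 ≤ N r c → n + 2 < 2 * z := by
    intro r c hrc h1
    have hsup : 1 ≤ maxEntryF ν (entryFun N) := by
      refine le_trans h1 ?_
      exact Finset.le_sup (f := fun p => entryFun N p.1 p.2)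
        ((YoungDiagram.mem_cells _).2 hrc)
    have hz' : countLtF ν (entryFun N) 1 = z := by
      simp only [countLtF, entryFun, hzC, hzdef, Nat.lt_one_iff]
    have hmem : (n + 1) - z ∈ DspC (n + 1) N := by
      simp only [DspC, DspCF]
      refine Multiset.mem_map.2 ⟨1, ?_, by rw [hz']⟩
      rw [Finset.mem_val, Finset.mem_Icc]
      exact ⟨le_refl 1, hsup⟩
    have := hbig _ hmem
    omega
  -- zeros form a prefix of row 0
  have hz0 : ∀ c, c < z → N 0 c = 0 := by
    intro c hc
    by_contra hne
    have hsub : ∀ p ∈ zC, p.2 < c ∧ p.1 = 0 := by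
      rintro ⟨r, c'⟩ hp
      have hr0 := hL1 _ hp
      simp only at hr0
      subst hr0
      simp only [hzC, Finset.mem_filter, YoungDiagram.mem_cells] at hp
      refine ⟨?_, rfl⟩
      by_contra hcc
      push_neg at hcc
      rcases eq_or_lt_of_le hcc with h | h
      · exact hne (h ▸ hp.2)
      · have hp2 : N 0 c' = 0 := hp.2
        have hle : N 0 c ≤ N 0 c' := N.row_weak h hp.1
        omega
    have hinj : z ≤ c := by
      have := Finset.card_le_card_of_injOn (fun p => p.2)
        (fun p hp => Finset.mem_range.2 (hsub p hp).1)
        (by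
          rintro ⟨r1, c1⟩ h1 ⟨r2, c2⟩ h2 h
          have e1 := (hsub _ h1).2
          have e2 := (hsub _ h2).2
          simp only at e1 e2 h
          simp [e1, e2, h])
      simpa using this
    omega
  have h00 : (0, 0) ∈ ν := by
    have hne : ν.cells.Nonempty := by
      rw [← Finset.card_pos, ← YoungDiagram.card]
      omega
    obtain ⟨p, hp⟩ := hne
    exact ν.isLowerSet (by simp [Prod.le_def]) hp
  have hz : 0 < z := by
    by_cases h : N 0 0 = 0
    · refine Finset.card_pos.2 ⟨(0, 0), ?_⟩
      rw [hzC, Finset.mem_filter]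
      exact ⟨(YoungDiagram.mem_cells _).2 h00, h⟩
    · have := hbig1 0 0 h00 (Nat.one_le_iff_ne_zero.2 h)
      omega
  have hN00 : N 0 0 = 0 := hz0 0 hz
  -- cells in row 1 are bounded by z
  have hP : ∀ j, (1, j) ∈ ν → j + 1 < z := by
    intro j hj
    have h1 : 1 ≤ N 1 j := by
      have := N.col_strict Nat.zero_lt_one hj
      omega
    have hb := hbig1 1 j hj h1
    set pC : Finset (ℕ × ℕ) := ν.cells.filter (fun c => ¬ N c.1 c.2 = 0) with hpC
    have hzp : z + pC.card = n + 1 := by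
      rw [hzdef, hzC, hpC, Finset.card_filter_add_card_filter_not,
        ← YoungDiagram.card, hcard]
    have hcle : j + 1 ≤ pC.card := by
      have := Finset.card_le_card_of_injOn
        (f := fun c => ((1 : ℕ), c)) (s := Finset.range (j + 1)) (t := pC)
        (by
          intro c hc
          rw [Finset.mem_coe, Finset.mem_range] at hc
          have hmem : (1, c) ∈ ν := ν.isLowerSet
            (by simp [Prod.le_def]; omega) hj
          have h1c : 1 ≤ N 1 c := by
            have := N.col_strict Nat.zero_lt_one hmem
            omega
          simp only [Finset.mem_coe, hpC, Finset.mem_filter, YoungDiagram.mem_cells]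
          exact ⟨hmem, by omega⟩)
        (by intro a _ b _ h; simpa using h)
      simpa using this
    omega
  set L : ℕ := ν.rowLen 0 with hLdef
  have hL : 0 < L := by
    rw [hLdef, ← YoungDiagram.mem_iff_lt_rowLen]
    exact h00
  have hzL : z ≤ L := by
    have := Finset.card_le_card_of_injOn (fun p => p.2)
      (s := zC) (t := Finset.range L)
      (by
        rintro ⟨r, c⟩ hp
        have hr0 := hL1 _ hp
        simp only at hr0
        subst hr0
        simp only [Finset.mem_coe, hzC, Finset.mem_filter, YoungDiagram.mem_cells,
          YoungDiagram.mem_iff_lt_rowLen] at hp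
        simpa using hp.1)
      (by
        rintro ⟨r1, c1⟩ h1 ⟨r2, c2⟩ h2 h
        have e1 := hL1 _ h1
        have e2 := hL1 _ h2
        simp only at e1 e2 h
        simp [e1, e2, h])
    simpa using this
  -- construct lam
  have hmemL : (0, L - 1) ∈ ν.cells := by
    rw [YoungDiagram.mem_cells, YoungDiagram.mem_iff_lt_rowLen]
    omega
  set lam : YoungDiagram :=
    ⟨ν.cells.erase (0, L - 1), by
      rintro ⟨a1, a2⟩ ⟨b1, b2⟩ hba ha
      rw [Finset.mem_coe, Finset.mem_erase] at ha ⊢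
      obtain ⟨hane, haν⟩ := ha
      rw [YoungDiagram.mem_cells] at haν
      have hbν : (b1, b2) ∈ ν := ν.isLowerSet hba haν
      refine ⟨?_, (YoungDiagram.mem_cells _).2 hbν⟩
      rintro hbeq
      simp only [ne_eq, Prod.mk.injEq, not_and] at hbeq
      obtain ⟨hb1, hb2⟩ := hbeq
      subst hb1; subst hb2
      rw [Prod.le_def] at hba
      have hba2 : L - 1 ≤ a2 := hba.2
      have ha2L : a2 < ν.rowLen a1 := YoungDiagram.mem_iff_lt_rowLen.1 haν
      have hle := ν.rowLen_anti 0 a1 (Nat.zero_le _)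
      rcases Nat.eq_zero_or_pos a1 with h1 | h1
      · subst h1
        apply hane
        simp only [Prod.mk.injEq, true_and]
        omega
      · have hmem1 : (1, a2) ∈ ν := ν.isLowerSet
          (by rw [Prod.le_def]; constructor <;> simp <;> omega) haν
        have := hP a2 hmem1
        omega⟩ with hlam
  have hmemlam : ∀ r c, (r, c) ∈ lam ↔ ((r, c) ∈ ν ∧ (r, c) ≠ ((0 : ℕ), L - 1)) := by
    intro r c
    change (r, c) ∈ ν.cells.erase (0, L - 1) ↔ _
    rw [Finset.mem_erase, YoungDiagram.mem_cells]
    tauto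
  have hlamrow : lam.rowLen 0 = L - 1 := by
    refine le_antisymm ?_ ?_
    · by_contra h
      push_neg at h
      have : ((0 : ℕ), L - 1) ∈ lam := YoungDiagram.mem_iff_lt_rowLen.2 h
      rw [hmemlam] at this
      exact this.2 rfl
    · rcases Nat.eq_zero_or_pos (L - 1) with h | h
      · omega
      · have : ((0 : ℕ), L - 2) ∈ lam := by
          rw [hmemlam, YoungDiagram.mem_iff_lt_rowLen]
          constructor
          · omega
          · simp only [ne_eq, Prod.mk.injEq, true_and]
            omega
        have := YoungDiagram.mem_iff_lt_rowLen.1 this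
        omega
  have hlamcard : lam.card = n := by
    show (ν.cells.erase (0, L - 1)).card = n
    rw [Finset.card_erase_of_mem hmemL, hcard']
    omega
  have hcells : ν.cells = insert (0, lam.rowLen 0) lam.cells := by
    rw [hlamrow]
    exact (Finset.insert_erase hmemL).symm
  -- construct M
  set M : SemistandardYoungTableau lam :=
    ⟨g0, by
      intro i j1 j2 hj hmem
      rcases Nat.eq_zero_or_pos i with h0 | h0
      · subst h0
        simp only [hg0, if_pos rfl]
        refine N.row_weak (by omega) ?_
        rw [hmemlam, YoungDiagram.mem_iff_lt_rowLen] at hmem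
        rw [YoungDiagram.mem_iff_lt_rowLen]
        have : j2 ≠ L - 1 := by
          intro h; exact hmem.2 (by simp only [Prod.mk.injEq, true_and]; omega)
        omega
      · have hi : i ≠ 0 := by omega
        simp only [hg0, if_neg hi]
        exact N.row_weak hj ((hmemlam _ _).1 hmem).1,
     by
      intro i1 i2 j hi hmem
      have hi2 : i2 ≠ 0 := by
        intro h; subst h; omega
      have hmemν : (i2, j) ∈ ν := ((hmemlam _ _).1 hmem).1
      rcases Nat.eq_zero_or_pos i1 with h0 | h0
      · subst h0
        simp only [hg0, if_pos rfl, if_neg hi2]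
        have hmem1 : (1, j) ∈ ν := ν.isLowerSet
          (by rw [Prod.le_def]; constructor <;> simp <;> omega) hmemν
        have hz1 := hz0 (j + 1) (hP j hmem1)
        have := N.col_strict (by omega : 0 < i2) hmemν
        omega
      · have hi1 : i1 ≠ 0 := by omega
        simp only [hg0, if_neg hi1, if_neg hi2]
        exact N.col_strict hi hmemν,
     by
      intro i j hmem
      rcases Nat.eq_zero_or_pos i with h0 | h0
      · subst h0
        simp only [hg0, if_pos rfl]
        apply N.zeros
        rw [hmemlam, YoungDiagram.mem_iff_lt_rowLen] at hmem
        rw [YoungDiagram.mem_iff_lt_rowLen]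
        intro hjL
        apply hmem
        constructor
        · omega
        · simp only [ne_eq, Prod.mk.injEq, true_and]
          omega
      · have hi : i ≠ 0 := by omega
        simp only [hg0, if_neg hi]
        apply N.zeros
        intro hmem'
        apply hmem
        rw [hmemlam]
        exact ⟨hmem', fun h => hi (congrArg Prod.fst h)⟩⟩ with hM
  have hMfun : entryFun M = g0 := rfl
  -- the iota property
  have hNgood : ∀ r c, N r c = iotaHatFun g0 r c := by
    intro r c
    simp only [iotaHatFun]
    rcases Nat.eq_zero_or_pos r with h0 | h0
    · subst h0
      rcases Nat.eq_zero_or_pos c with hc | hc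
      · subst hc
        simp [hN00]
      · have hcne : c ≠ 0 := by omega
        have hc1 : c - 1 + 1 = c := by omega
        simp only [if_pos rfl, if_neg hcne, hg0, hc1, if_true]
    · have hr : r ≠ 0 := by omega
      simp only [if_neg hr, hg0]
  -- entry sums agree
  have hsum : entrySum M = entrySum N := by
    have key : ∑ p ∈ lam.cells, g0 p.1 p.2 = ∑ p ∈ ν.cells.erase (0, 0), N p.1 p.2 := by
      refine Finset.sum_nbij' (fun p : ℕ × ℕ => if p.1 = 0 then (0, p.2 + 1) else p)
        (fun q : ℕ × ℕ => if q.1 = 0 then (0, q.2 - 1) else q) ?_ ?_ ?_ ?_ ?_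
      · rintro ⟨r, c⟩ hp
        have hp' := (hmemlam r c).1 ((YoungDiagram.mem_cells _).1 hp)
        rcases Nat.eq_zero_or_pos r with h0 | h0
        · subst h0
          have hcl : c < L := YoungDiagram.mem_iff_lt_rowLen.1 hp'.1
          have hcne : c ≠ L - 1 := fun h =>
            hp'.2 (by simp only [Prod.mk.injEq, true_and]; omega)
          show ((0 : ℕ), c + 1) ∈ ν.cells.erase (0, 0)
          rw [Finset.mem_erase]
          constructor
          · simp only [ne_eq, Prod.mk.injEq, true_and]
            omega
          · rw [YoungDiagram.mem_cells, YoungDiagram.mem_iff_lt_rowLen]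
            omega
        · have hr : r ≠ 0 := by omega
          simp only [if_neg hr]
          rw [Finset.mem_erase]
          exact ⟨fun hq => hr (congrArg Prod.fst hq), (YoungDiagram.mem_cells _).2 hp'.1⟩
      · rintro ⟨r, c⟩ hq
        rw [Finset.mem_erase, YoungDiagram.mem_cells] at hq
        obtain ⟨hne, hmem⟩ := hq
        rcases Nat.eq_zero_or_pos r with h0 | h0
        · subst h0
          have hc : 0 < c := by
            rcases Nat.eq_zero_or_pos c with h | h
            · exact absurd (by simp [h]) hne
            · exact h
          have hcl : c < L := YoungDiagram.mem_iff_lt_rowLen.1 hmem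
          have hmm : ((0 : ℕ), c - 1) ∈ lam := by
            rw [hmemlam, YoungDiagram.mem_iff_lt_rowLen]
            constructor
            · omega
            · simp only [ne_eq, Prod.mk.injEq, true_and]
              omega
          show ((0 : ℕ), c - 1) ∈ lam.cells
          exact (YoungDiagram.mem_cells _).2 hmm
        · have hr : r ≠ 0 := by omega
          have hmm : (r, c) ∈ lam := by
            rw [hmemlam]
            exact ⟨hmem, fun h => hr (congrArg Prod.fst h)⟩
          simp only [if_neg hr]
          exact (YoungDiagram.mem_cells _).2 hmm
      · rintro ⟨r, c⟩ hp
        rcases Nat.eq_zero_or_pos r with h0 | h0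
        · subst h0
          simp
        · have hr : r ≠ 0 := by omega
          simp [hr]
      · rintro ⟨r, c⟩ hq
        rw [Finset.mem_erase, YoungDiagram.mem_cells] at hq
        rcases Nat.eq_zero_or_pos r with h0 | h0
        · subst h0
          have hc : 0 < c := by
            rcases Nat.eq_zero_or_pos c with h | h
            · exact absurd (by simp [h]) hq.1
            · exact h
          have hc1 : c - 1 + 1 = c := by omega
          simp [hc1]
        · have hr : r ≠ 0 := by omega
          simp [hr]
      · rintro ⟨r, c⟩ hp
        rcases Nat.eq_zero_or_pos r with h0 | h0
        · subst h0
          simp [hg0]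
        · have hr : r ≠ 0 := by omega
          simp [hg0, hr]
    calc entrySum M = ∑ p ∈ lam.cells, g0 p.1 p.2 := rfl
      _ = ∑ p ∈ ν.cells.erase (0, 0), N p.1 p.2 := key
      _ = ∑ p ∈ ν.cells, N p.1 p.2 := Finset.sum_erase _ (by simpa using hN00)
      _ = entrySum N := rfl
  refine ⟨g0, ⟨⟨lam, M, hlamcard, hcells, hMfun.symm, hsum⟩, hNgood⟩, ?_⟩
  rintro f' ⟨-, hN'⟩
  funext r c
  rcases Nat.eq_zero_or_pos r with h0 | h0
  · subst h0
    have := hN' 0 (c + 1)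
    simp only [iotaHatFun, if_pos rfl, Nat.add_sub_cancel] at this
    rw [if_neg (by omega : c + 1 ≠ 0)] at this
    simp only [hg0, if_pos rfl]
    exact this.symm
  · have hr : r ≠ 0 := by omega
    have := hN' r c
    simp only [iotaHatFun, if_neg hr] at this
    simp only [hg0, if_neg hr]
    exact this.symm
end GHS
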